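/- Let Ω ⊂ ℝ³ be a bounded measurable set, and let H(p,q) ∈ ℝ³ be defined for q ∈ Ω and p in the convex hull of Ω with p ≠ q, such that for each fixed q ∈ Ω the map p ↦ H(p,q) is differentiable on (conv Ω) \ {q}. Suppose there is a constant C > 0 such that |H(p,q)| ≤ C |p−q|⁻² and |D_p H(p,q)| ≤ C |p−q|⁻³ whenever p ≠ q. Then for every f ∈ L^∞(Ω), the function F(p) := ∫_Ω H(p,q) f(q) dq is well defined with |F(p)| ≤ C ‖f‖_{L^∞} (vol(Ω) + 4π) for every p, and there is a constant C′ depending only on C and the diameter of Ω such that |F(p₁) − F(p₂)| ≤ C′ ‖f‖_{L^∞} λ(|p₁ − p₂|) for all p₁, p₂ ∈ Ω; that is, F is quasi-Lipschitz continuous. -/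

import Mathlib

open MeasureTheory

/-- The quasi-Lipschitz modulus: `λ(d) = d (1 - log d)` for `0 ≤ d < 1`
and `λ(d) = 1` for `d ≥ 1`. -/
noncomputable def qlLambda (d : ℝ) : ℝ := if 1 ≤ d then 1 else d * (1 - Real.log d)

section QLHelpers
open Metric Set ENNReal

local notation "E3" => EuclideanSpace ℝ (Fin 3)

lemma dimE3 : Module.finrank ℝ (EuclideanSpace ℝ (Fin 3)) = 3 := by
  simp [finrank_euclideanSpace]

lemma volume_unitBall_E3 :
    volume (ball (0 : E3) 1) = ENNReal.ofReal (4 / 3 * Real.pi) := by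
  rw [EuclideanSpace.volume_ball]
  have hcard : (Fintype.card (Fin 3) : ℝ) = 3 := by simp
  have h32 : ((Fintype.card (Fin 3) : ℝ) / 2 + 1) = (3 : ℝ) / 2 + 1 := by rw [hcard]
  have hg : Real.Gamma ((Fintype.card (Fin 3) : ℝ) / 2 + 1) = 3 / 4 * Real.sqrt Real.pi := by
    rw [h32, Real.Gamma_add_one (by norm_num)]
    have : (3 : ℝ) / 2 = 1 / 2 + 1 := by norm_num
    rw [this, Real.Gamma_add_one (by norm_num), Real.Gamma_one_half_eq]
    ring
  rw [hg]
  have hs : Real.sqrt Real.pi ^ Fintype.card (Fin 3) = Real.pi * Real.sqrt Real.pi := by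
    have : Real.sqrt Real.pi ^ Fintype.card (Fin 3) = Real.sqrt Real.pi ^ 2 * Real.sqrt Real.pi := by
      norm_num; ring
    rw [this, Real.sq_sqrt Real.pi_nonneg]
  rw [hs]
  have hsp : Real.sqrt Real.pi ≠ 0 := by
    positivity
  have : Real.pi * Real.sqrt Real.pi / (3 / 4 * Real.sqrt Real.pi) = 4 / 3 * Real.pi := by
    field_simp
  rw [this]
  simp

lemma lintegral_polar_E3 (g : ℝ → ℝ≥0∞) (hg : Measurable g) :
    ∫⁻ x : E3, g ‖x‖ =
      ENNReal.ofReal (4 * Real.pi) * ∫⁻ y in Set.Ioi (0 : ℝ), ENNReal.ofReal (y ^ 2) * g y := by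
  have h0 : ∫⁻ x : E3, g ‖x‖ ∂volume
      = ∫⁻ x : ({0}ᶜ : Set E3), g ‖(x : E3)‖ ∂(volume.comap Subtype.val) := by
    rw [lintegral_subtype_comap (measurableSet_singleton (0:E3)).compl
      (fun x => g ‖x‖), MeasureTheory.restrict_compl_singleton]
  rw [h0]
  have hmp := (volume : Measure E3).measurePreserving_homeomorphUnitSphereProd
  have hcomp := hmp.lintegral_comp
    (f := fun z : sphere (0:E3) 1 × Set.Ioi (0:ℝ) => g z.2)
    (hg.comp (measurable_subtype_coe.comp measurable_snd))
  have heq : ∀ x : ({0}ᶜ : Set E3),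
      g ((homeomorphUnitSphereProd E3 x).2 : ℝ) = g ‖(x : E3)‖ := by
    intro x; simp only [homeomorphUnitSphereProd_apply_snd_coe]
  rw [← lintegral_congr heq, hcomp]
  beta_reduce
  have h2 := lintegral_prod (μ := (volume : Measure E3).toSphere)
    (ν := Measure.volumeIoiPow (Module.finrank ℝ E3 - 1))
    (fun z => g z.2.1)
    ((hg.comp (measurable_subtype_coe.comp measurable_snd)).aemeasurable)
  rw [h2]
  simp only [lintegral_const]
  have h3 : (volume : Measure E3).toSphere Set.univ = ENNReal.ofReal (4 * Real.pi) := by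
    rw [Measure.toSphere_apply_univ, volume_unitBall_E3, dimE3]
    rw [show ((3:ℕ) : ℝ≥0∞) = ENNReal.ofReal (3:ℝ) by simp,
      ← ENNReal.ofReal_mul (by norm_num)]
    congr 1; ring
  have h4 : ∫⁻ (y : ↑(Set.Ioi (0:ℝ))), g ↑y ∂Measure.volumeIoiPow (Module.finrank ℝ E3 - 1)
      = ∫⁻ y in Set.Ioi (0:ℝ), ENNReal.ofReal (y ^ 2) * g y := by
    rw [Measure.volumeIoiPow, dimE3]
    rw [show (3 - 1 : ℕ) = 2 from rfl]
    rw [lintegral_withDensity_eq_lintegral_mul _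
      ((measurable_subtype_coe.pow_const 2).ennreal_ofReal)
      (show Measurable fun y : Set.Ioi (0:ℝ) => g ↑y from hg.comp measurable_subtype_coe)]
    rw [← lintegral_subtype_comap measurableSet_Ioi
      (fun y : ℝ => ENNReal.ofReal (y ^ 2) * g y)]
    rfl
  rw [h3, h4, mul_comm]

lemma radial_ball_E3 (p : E3) (r : ℝ) :
    ∫⁻ x in ball p r, ENNReal.ofReal ((‖p - x‖ ^ 2)⁻¹)
      ≤ ENNReal.ofReal (4 * Real.pi * r) := by
  set g : ℝ → ℝ≥0∞ := fun y => if y < r then ENNReal.ofReal ((y ^ 2)⁻¹) else 0 with hgdef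
  have hgm : Measurable g := Measurable.ite measurableSet_Iio
    ((measurable_id.pow_const 2).inv.ennreal_ofReal) measurable_const
  have h1 : ∫⁻ x in ball p r, ENNReal.ofReal ((‖p - x‖ ^ 2)⁻¹)
      = ∫⁻ x in ball p r, g ‖x - p‖ := by
    refine setLIntegral_congr_fun measurableSet_ball (fun x hx => ?_)
    have hlt : ‖x - p‖ < r := by rw [← dist_eq_norm]; exact mem_ball.mp hx
    rw [norm_sub_rev p x]; simp only [hgdef]; rw [if_pos hlt]
  have h2 : ∫⁻ x, g ‖x - p‖ = ∫⁻ x : E3, g ‖x‖ :=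
    lintegral_sub_right_eq_self (fun x : E3 => g ‖x‖) p
  have h3 : ∫⁻ y in Set.Ioi (0:ℝ), ENNReal.ofReal (y ^ 2) * g y
      = ENNReal.ofReal (r - 0) := by
    have : ∫⁻ y in Set.Ioi (0:ℝ), ENNReal.ofReal (y ^ 2) * g y
        = ∫⁻ y in Set.Ioi (0:ℝ), (Set.Ioo (0:ℝ) r).indicator (fun _ => 1) y := by
      refine setLIntegral_congr_fun measurableSet_Ioi (fun y hy => ?_)
      by_cases hyr : y < r
      · rw [hgdef]
        simp only [if_pos hyr]
        rw [← ENNReal.ofReal_mul (sq_nonneg y) ,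
          mul_inv_cancel₀ (pow_ne_zero 2 (ne_of_gt hy))]
        rw [Set.indicator_of_mem (show y ∈ Set.Ioo (0:ℝ) r from ⟨hy, hyr⟩)]
        simp
      · rw [hgdef]
        simp only [if_neg hyr, mul_zero]
        rw [Set.indicator_of_notMem (fun hmem => hyr hmem.2)]
    have hinter : Set.Ioo (0:ℝ) r ∩ Set.Ioi 0 = Set.Ioo 0 r :=
      Set.inter_eq_left.mpr (fun y hy => hy.1)
    rw [this, lintegral_indicator measurableSet_Ioo, Measure.restrict_restrict measurableSet_Ioo,
      hinter, setLIntegral_one, Real.volume_Ioo]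
  calc ∫⁻ x in ball p r, ENNReal.ofReal ((‖p - x‖ ^ 2)⁻¹)
      = ∫⁻ x in ball p r, g ‖x - p‖ := h1
    _ ≤ ∫⁻ x, g ‖x - p‖ := setLIntegral_le_lintegral _ _
    _ = ∫⁻ x : E3, g ‖x‖ := h2
    _ = ENNReal.ofReal (4 * Real.pi) * ∫⁻ y in Set.Ioi (0:ℝ), ENNReal.ofReal (y ^ 2) * g y :=
        lintegral_polar_E3 g hgm
    _ ≤ ENNReal.ofReal (4 * Real.pi) * ENNReal.ofReal r := by
        rw [h3, sub_zero]
    _ = ENNReal.ofReal (4 * Real.pi * r) := by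
        rw [← ENNReal.ofReal_mul (by positivity)]

lemma radial_annulus_E3 (p : E3) (a b : ℝ) (ha : 0 < a) (hab : a ≤ b) :
    ∫⁻ x in closedBall p b \ ball p a, ENNReal.ofReal ((‖p - x‖ ^ 3)⁻¹)
      ≤ ENNReal.ofReal (4 * Real.pi) * ENNReal.ofReal (Real.log b - Real.log a) := by
  have hb : 0 < b := lt_of_lt_of_le ha hab
  set g : ℝ → ℝ≥0∞ := fun y => if a ≤ y ∧ y ≤ b then ENNReal.ofReal ((y ^ 3)⁻¹) else 0
    with hgdef
  have hgm : Measurable g := Measurable.ite measurableSet_Icc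
    ((measurable_id.pow_const 3).inv.ennreal_ofReal) measurable_const
  have h1 : ∫⁻ x in closedBall p b \ ball p a, ENNReal.ofReal ((‖p - x‖ ^ 3)⁻¹)
      = ∫⁻ x in closedBall p b \ ball p a, g ‖x - p‖ := by
    refine setLIntegral_congr_fun (measurableSet_closedBall.diff measurableSet_ball)
      (fun x hx => ?_)
    have hub : ‖x - p‖ ≤ b := by rw [← dist_eq_norm]; exact mem_closedBall.mp hx.1
    have hlb : a ≤ ‖x - p‖ := by
      rw [← dist_eq_norm]; exact not_lt.mp (fun h => hx.2 (mem_ball.mpr h))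
    rw [norm_sub_rev p x]; simp only [hgdef]; rw [if_pos ⟨hlb, hub⟩]
  have h2 : ∫⁻ x, g ‖x - p‖ = ∫⁻ x : E3, g ‖x‖ :=
    lintegral_sub_right_eq_self (fun x : E3 => g ‖x‖) p
  have hsub : Set.Icc a b ⊆ Set.Ioi (0:ℝ) := fun y hy => lt_of_lt_of_le ha hy.1
  have h3 : ∫⁻ y in Set.Ioi (0:ℝ), ENNReal.ofReal (y ^ 2) * g y
      = ∫⁻ y in Set.Icc a b, ENNReal.ofReal y⁻¹ := by
    have hcongr : ∫⁻ y in Set.Ioi (0:ℝ), ENNReal.ofReal (y ^ 2) * g y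
        = ∫⁻ y in Set.Ioi (0:ℝ),
            (Set.Icc a b).indicator (fun y => ENNReal.ofReal y⁻¹) y := by
      refine setLIntegral_congr_fun measurableSet_Ioi (fun y hy => ?_)
      by_cases hc : a ≤ y ∧ y ≤ b
      · rw [hgdef]
        simp only [if_pos hc]
        have hy0 : y ≠ 0 := ne_of_gt hy
        rw [← ENNReal.ofReal_mul (sq_nonneg y)]
        have hval : y ^ 2 * (y ^ 3)⁻¹ = y⁻¹ := by field_simp
        rw [hval, Set.indicator_of_mem (show y ∈ Set.Icc a b from ⟨hc.1, hc.2⟩)]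
      · rw [hgdef]
        simp only [if_neg hc, mul_zero]
        rw [Set.indicator_of_notMem (fun hmem => hc ⟨hmem.1, hmem.2⟩)]
    rw [hcongr, lintegral_indicator measurableSet_Icc,
      Measure.restrict_restrict measurableSet_Icc, Set.inter_eq_left.mpr hsub]
  have hcont : ContinuousOn (fun y : ℝ => y⁻¹) (Set.Icc a b) :=
    ContinuousOn.inv₀ continuousOn_id (fun y hy => ne_of_gt (lt_of_lt_of_le ha hy.1))
  have hInt : IntegrableOn (fun y : ℝ => y⁻¹) (Set.Icc a b) :=
    hcont.integrableOn_Icc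
  have h4 : ∫⁻ y in Set.Icc a b, ENNReal.ofReal y⁻¹
      = ENNReal.ofReal (∫ y in Set.Icc a b, y⁻¹) := by
    rw [← ofReal_integral_eq_lintegral_ofReal hInt]
    filter_upwards [ae_restrict_mem measurableSet_Icc] with y hy
    exact inv_nonneg.mpr (le_of_lt (lt_of_lt_of_le ha hy.1))
  have h5 : ∫ y in Set.Icc a b, y⁻¹ = Real.log b - Real.log a := by
    rw [MeasureTheory.integral_Icc_eq_integral_Ioc, ← intervalIntegral.integral_of_le hab,
      integral_inv_of_pos ha hb, Real.log_div (ne_of_gt hb) (ne_of_gt ha)]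
  calc ∫⁻ x in closedBall p b \ ball p a, ENNReal.ofReal ((‖p - x‖ ^ 3)⁻¹)
      = ∫⁻ x in closedBall p b \ ball p a, g ‖x - p‖ := h1
    _ ≤ ∫⁻ x, g ‖x - p‖ := setLIntegral_le_lintegral _ _
    _ = ∫⁻ x : E3, g ‖x‖ := h2
    _ = ENNReal.ofReal (4 * Real.pi) * ∫⁻ y in Set.Ioi (0:ℝ), ENNReal.ofReal (y ^ 2) * g y :=
        lintegral_polar_E3 g hgm
    _ = ENNReal.ofReal (4 * Real.pi) * ENNReal.ofReal (Real.log b - Real.log a) := by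
        rw [h3, h4, h5]

end QLHelpers

set_option maxHeartbeats 1000000

/-- Regularity of the potential: for a kernel `H(p,q) ∈ ℝ³` on a bounded measurable
`Ω ⊆ ℝ³`, differentiable in `p` on `(conv Ω) \ {q}` with `|H(p,q)| ≤ C |p-q|⁻²` and
`|D_p H(p,q)| ≤ C |p-q|⁻³`, and any `f ∈ L^∞(Ω)` with `‖f‖_∞ ≤ M`, the function
`F(p) = ∫_Ω H(p,q) f(q) dq` is well defined with `|F(p)| ≤ C M (vol(Ω) + 4π)`, and `F`
is quasi-Lipschitz on `Ω`: `|F(p₁) - F(p₂)| ≤ C' M λ(|p₁ - p₂|)` for a constant `C'`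
depending only on `C` and the diameter of `Ω`. -/
theorem potential_bounded_and_quasiLipschitz
    (Ω : Set (EuclideanSpace ℝ (Fin 3))) (hmeas : MeasurableSet Ω)
    (hbdd : Bornology.IsBounded Ω)
    (C : ℝ) (hC : 0 < C)
    (H : EuclideanSpace ℝ (Fin 3) → EuclideanSpace ℝ (Fin 3) → EuclideanSpace ℝ (Fin 3))
    (H' : EuclideanSpace ℝ (Fin 3) → EuclideanSpace ℝ (Fin 3) →
      (EuclideanSpace ℝ (Fin 3) →L[ℝ] EuclideanSpace ℝ (Fin 3)))
    (hHmeas : ∀ p, AEStronglyMeasurable (fun q => H p q) (volume.restrict Ω))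
    (hdiff : ∀ q ∈ Ω, ∀ p ∈ (convexHull ℝ Ω) \ {q},
      HasFDerivWithinAt (fun p' => H p' q) (H' p q) ((convexHull ℝ Ω) \ {q}) p)
    (hH : ∀ q ∈ Ω, ∀ p ∈ convexHull ℝ Ω, p ≠ q → ‖H p q‖ ≤ C * (‖p - q‖ ^ 2)⁻¹)
    (hH' : ∀ q ∈ Ω, ∀ p ∈ convexHull ℝ Ω, p ≠ q → ‖H' p q‖ ≤ C * (‖p - q‖ ^ 3)⁻¹)
    (f : EuclideanSpace ℝ (Fin 3) → ℝ)
    (hfmeas : AEStronglyMeasurable f (volume.restrict Ω))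
    (M : ℝ) (hM : 0 ≤ M) (hf : ∀ᵐ q ∂(volume.restrict Ω), |f q| ≤ M) :
    (∀ p ∈ convexHull ℝ Ω, IntegrableOn (fun q => f q • H p q) Ω) ∧
    (∀ p ∈ convexHull ℝ Ω,
      ‖∫ q in Ω, f q • H p q‖ ≤ C * M * ((volume Ω).toReal + 4 * Real.pi)) ∧
    (∃ C' > (0 : ℝ), ∀ p₁ ∈ Ω, ∀ p₂ ∈ Ω,
      ‖(∫ q in Ω, f q • H p₁ q) - ∫ q in Ω, f q • H p₂ q‖
        ≤ C' * M * qlLambda ‖p₁ - p₂‖) := by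
  have hconv : Ω ⊆ convexHull ℝ Ω := subset_convexHull ℝ Ω
  have hvol : volume Ω ≠ ⊤ := hbdd.measure_lt_top.ne
  set V : ℝ := (volume Ω).toReal with hV
  have hVnn : 0 ≤ V := ENNReal.toReal_nonneg
  set A : ENNReal := ENNReal.ofReal (C * M) with hA
  have hAne : A ≠ ⊤ := ENNReal.ofReal_ne_top
  have hne : ∀ p : EuclideanSpace ℝ (Fin 3), ∀ᵐ q ∂(volume.restrict Ω), q ≠ p := by
    intro p
    refine ae_restrict_of_ae ?_
    rw [ae_iff]
    have hset : {q : EuclideanSpace ℝ (Fin 3) | ¬ q ≠ p} = {p} := by ext q; simp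
    rw [hset]
    exact measure_singleton p
  have hbound : ∀ p ∈ convexHull ℝ Ω, ∀ᵐ q ∂(volume.restrict Ω),
      ENNReal.ofReal ‖f q • H p q‖ ≤ A * ENNReal.ofReal ((‖p - q‖ ^ 2)⁻¹) := by
    intro p hp
    filter_upwards [hf, hne p, ae_restrict_mem hmeas] with q hfq hqp hqΩ
    have h1 : ‖f q • H p q‖ ≤ C * M * (‖p - q‖ ^ 2)⁻¹ := by
      rw [norm_smul, Real.norm_eq_abs]
      have h2 := hH q hqΩ p hp (fun h => hqp h.symm)
      have h3 : |f q| * ‖H p q‖ ≤ M * (C * (‖p - q‖ ^ 2)⁻¹) :=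
        mul_le_mul hfq h2 (norm_nonneg _) hM
      calc |f q| * ‖H p q‖ ≤ M * (C * (‖p - q‖ ^ 2)⁻¹) := h3
        _ = C * M * (‖p - q‖ ^ 2)⁻¹ := by ring
    calc ENNReal.ofReal ‖f q • H p q‖ ≤ ENNReal.ofReal (C * M * (‖p - q‖ ^ 2)⁻¹) :=
          ENNReal.ofReal_le_ofReal h1
      _ = A * ENNReal.ofReal ((‖p - q‖ ^ 2)⁻¹) := by
          rw [hA, ← ENNReal.ofReal_mul (by positivity)]
  have hlint : ∀ p ∈ convexHull ℝ Ω, ∀ s : Set (EuclideanSpace ℝ (Fin 3)), s ⊆ Ω →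
      ∫⁻ q in s, ENNReal.ofReal ‖f q • H p q‖
        ≤ A * ∫⁻ q in s, ENNReal.ofReal ((‖p - q‖ ^ 2)⁻¹) := by
    intro p hp s hs
    refine le_trans
      (lintegral_mono_ae (ae_restrict_of_ae_restrict_of_subset hs (hbound p hp))) ?_
    rw [lintegral_const_mul' _ _ hAne]
  have hkey : ∀ p : EuclideanSpace ℝ (Fin 3),
      ∫⁻ q in Ω, ENNReal.ofReal ((‖p - q‖ ^ 2)⁻¹)
        ≤ ENNReal.ofReal (V + 4 * Real.pi) := by
    intro p
    calc ∫⁻ q in Ω, ENNReal.ofReal ((‖p - q‖ ^ 2)⁻¹)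
        ≤ ∫⁻ q in Ω, ((Metric.ball p 1).indicator
              (fun q => ENNReal.ofReal ((‖p - q‖ ^ 2)⁻¹)) q + 1) := by
          refine lintegral_mono fun q => ?_
          by_cases hq : q ∈ Metric.ball p 1
          · rw [Set.indicator_of_mem hq]; exact le_add_of_nonneg_right zero_le
          · rw [Set.indicator_of_notMem hq, zero_add]
            have h1 : 1 ≤ ‖p - q‖ := by
              rw [norm_sub_rev, ← dist_eq_norm]
              exact not_lt.mp (fun h => hq (Metric.mem_ball.mpr h))
            have h2 : (‖p - q‖ ^ 2)⁻¹ ≤ 1 := by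
              have : (1:ℝ) ≤ ‖p - q‖ ^ 2 := one_le_pow₀ h1
              rw [inv_le_one_iff₀]
              right; exact this
            calc ENNReal.ofReal ((‖p - q‖ ^ 2)⁻¹) ≤ ENNReal.ofReal 1 :=
                  ENNReal.ofReal_le_ofReal h2
              _ = 1 := ENNReal.ofReal_one
      _ = (∫⁻ q in Ω, (Metric.ball p 1).indicator
              (fun q => ENNReal.ofReal ((‖p - q‖ ^ 2)⁻¹)) q) + volume Ω := by
          rw [lintegral_add_right _ measurable_const, setLIntegral_one]
      _ ≤ (∫⁻ q, (Metric.ball p 1).indicator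
              (fun q => ENNReal.ofReal ((‖p - q‖ ^ 2)⁻¹)) q) + volume Ω :=
          add_le_add_left (setLIntegral_le_lintegral _ _) _
      _ = (∫⁻ q in Metric.ball p 1, ENNReal.ofReal ((‖p - q‖ ^ 2)⁻¹)) + volume Ω := by
          rw [lintegral_indicator measurableSet_ball]
      _ ≤ ENNReal.ofReal (4 * Real.pi * 1) + volume Ω :=
          add_le_add_left (radial_ball_E3 p 1) _
      _ = ENNReal.ofReal (V + 4 * Real.pi) := by
          rw [mul_one, ← ENNReal.ofReal_toReal hvol, ← hV,
            ← ENNReal.ofReal_add (by positivity) hVnn, add_comm]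
  have hint : ∀ p ∈ convexHull ℝ Ω, IntegrableOn (fun q => f q • H p q) Ω := by
    intro p hp
    refine ⟨hfmeas.smul (hHmeas p), ?_⟩
    rw [hasFiniteIntegral_iff_norm]
    refine lt_of_le_of_lt (le_trans (hlint p hp Ω subset_rfl)
      (mul_le_mul_right (hkey p) A)) ?_
    exact ENNReal.mul_lt_top ENNReal.ofReal_lt_top ENNReal.ofReal_lt_top
  have hpart2 : ∀ p ∈ convexHull ℝ Ω,
      ‖∫ q in Ω, f q • H p q‖ ≤ C * M * (V + 4 * Real.pi) := by
    intro p hp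
    refine le_trans (norm_integral_le_lintegral_norm _) ?_
    refine ENNReal.toReal_le_of_le_ofReal (by positivity) ?_
    calc ∫⁻ q in Ω, ENNReal.ofReal ‖f q • H p q‖
        ≤ A * ENNReal.ofReal (V + 4 * Real.pi) :=
          le_trans (hlint p hp Ω subset_rfl) (mul_le_mul_right (hkey p) A)
      _ = ENNReal.ofReal (C * M * (V + 4 * Real.pi)) := by
          rw [hA, ← ENNReal.ofReal_mul (by positivity)]
  refine ⟨hint, hpart2, ?_⟩
  set R : ℝ := Metric.diam Ω + 2 with hR
  have hdiamnn : 0 ≤ Metric.diam Ω := Metric.diam_nonneg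
  have hR2 : 2 ≤ R := by rw [hR]; linarith
  have hR0 : 0 < R := by linarith
  have hlogR : 0 ≤ Real.log R := Real.log_nonneg (by linarith)
  refine ⟨2*C*(V + 4*Real.pi) + 20*Real.pi*C + 32*Real.pi*C*(1+Real.log R) + 1, ?_, ?_⟩
  · have h1 : 0 ≤ 2*C*(V + 4*Real.pi) := by positivity
    have h2 : 0 ≤ 20*Real.pi*C := by positivity
    have h3 : 0 ≤ 32*Real.pi*C*(1+Real.log R) := by positivity
    linarith
  intro p₁ hp₁ p₂ hp₂
  have hp₁' := hconv hp₁
  have hp₂' := hconv hp₂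
  set d : ℝ := ‖p₁ - p₂‖ with hd
  have hdnn : 0 ≤ d := norm_nonneg _
  rcases eq_or_lt_of_le hdnn with h0 | hdpos
  · have hpp : p₁ = p₂ := by
      rw [← sub_eq_zero]
      exact norm_eq_zero.mp h0.symm
    rw [hpp, sub_self, norm_zero]
    have hql0 : qlLambda d = 0 := by
      rw [qlLambda, if_neg (by rw [← h0]; norm_num), ← h0]
      ring
    rw [hql0, mul_zero]
  by_cases hd1 : 1 ≤ d
  · have hql : qlLambda d = 1 := by rw [qlLambda, if_pos hd1]
    rw [hql, mul_one]
    calc ‖(∫ q in Ω, f q • H p₁ q) - ∫ q in Ω, f q • H p₂ q‖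
        ≤ ‖∫ q in Ω, f q • H p₁ q‖ + ‖∫ q in Ω, f q • H p₂ q‖ := norm_sub_le _ _
      _ ≤ C * M * (V + 4*Real.pi) + C * M * (V + 4*Real.pi) :=
          add_le_add (hpart2 p₁ hp₁') (hpart2 p₂ hp₂')
      _ ≤ (2*C*(V + 4*Real.pi) + 20*Real.pi*C + 32*Real.pi*C*(1+Real.log R) + 1) * M := by
          have h2 : 0 ≤ 20*Real.pi*C*M := by positivity
          have h3 : 0 ≤ 32*Real.pi*C*(1+Real.log R)*M := by positivity
          nlinarith
  push_neg at hd1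
  have hlogd : Real.log d < 0 := Real.log_neg hdpos hd1
  have hql : qlLambda d = d * (1 - Real.log d) := by
    rw [qlLambda, if_neg (not_le.mpr hd1)]
  set B := Metric.ball p₁ (2*d) with hB
  have hInt1 : IntegrableOn (fun q => f q • H p₁ q) Ω := hint p₁ hp₁'
  have hInt2 : IntegrableOn (fun q => f q • H p₂ q) Ω := hint p₂ hp₂'
  have hGint : IntegrableOn (fun q => f q • H p₁ q - f q • H p₂ q) Ω := hInt1.sub hInt2
  have hsplit0 : (∫ q in Ω, f q • H p₁ q) - ∫ q in Ω, f q • H p₂ q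
      = ∫ q in Ω, (f q • H p₁ q - f q • H p₂ q) := (integral_sub hInt1 hInt2).symm
  have hsplit : ∫ q in Ω, (f q • H p₁ q - f q • H p₂ q)
      = (∫ q in Ω ∩ B, (f q • H p₁ q - f q • H p₂ q))
        + ∫ q in Ω \ B, (f q • H p₁ q - f q • H p₂ q) :=
    (integral_inter_add_diff measurableSet_ball hGint).symm
  -- near estimate
  have hnear : ∀ p ∈ convexHull ℝ Ω, ∀ r : ℝ, 0 ≤ r → Ω ∩ B ⊆ Metric.ball p r →
      ‖∫ q in Ω ∩ B, f q • H p q‖ ≤ C * M * (4 * Real.pi * r) := by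
    intro p hp r hr hsubB
    refine le_trans (norm_integral_le_lintegral_norm _) ?_
    refine ENNReal.toReal_le_of_le_ofReal (by positivity) ?_
    calc ∫⁻ q in Ω ∩ B, ENNReal.ofReal ‖f q • H p q‖
        ≤ A * ∫⁻ q in Ω ∩ B, ENNReal.ofReal ((‖p - q‖ ^ 2)⁻¹) :=
          hlint p hp _ Set.inter_subset_left
      _ ≤ A * ∫⁻ q in Metric.ball p r, ENNReal.ofReal ((‖p - q‖ ^ 2)⁻¹) :=
          mul_le_mul_right (lintegral_mono_set hsubB) A
      _ ≤ A * ENNReal.ofReal (4 * Real.pi * r) :=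
          mul_le_mul_right (radial_ball_E3 p r) A
      _ = ENNReal.ofReal (C * M * (4 * Real.pi * r)) := by
          rw [hA, ← ENNReal.ofReal_mul (by positivity)]
  have hsub1 : Ω ∩ B ⊆ Metric.ball p₁ (2*d) := fun q hq => hq.2
  have hsub2 : Ω ∩ B ⊆ Metric.ball p₂ (3*d) := by
    intro q hq
    have h1 : dist q p₁ < 2*d := Metric.mem_ball.mp hq.2
    have h2 : dist p₁ p₂ = d := by rw [dist_eq_norm, ← hd]
    have h3 : dist q p₂ ≤ dist q p₁ + dist p₁ p₂ := dist_triangle _ _ _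
    rw [Metric.mem_ball]
    linarith
  have hnear1 := hnear p₁ hp₁' (2*d) (by positivity) hsub1
  have hnear2 := hnear p₂ hp₂' (3*d) (by positivity) hsub2
  have hnear_tot : ‖∫ q in Ω ∩ B, (f q • H p₁ q - f q • H p₂ q)‖
      ≤ C*M*(4*Real.pi*(2*d)) + C*M*(4*Real.pi*(3*d)) := by
    rw [integral_sub (hInt1.mono_set Set.inter_subset_left)
      (hInt2.mono_set Set.inter_subset_left)]
    exact le_trans (norm_sub_le _ _) (add_le_add hnear1 hnear2)
  -- far pointwise estimate
  have hHdiff : ∀ q ∈ Ω \ B, ‖H p₁ q - H p₂ q‖ ≤ 8*C*d * (‖p₁ - q‖ ^ 3)⁻¹ := by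
    intro q hq
    obtain ⟨hqΩ, hqB⟩ := hq
    have hq1 : 2*d ≤ ‖p₁ - q‖ := by
      rw [norm_sub_rev, ← dist_eq_norm]
      exact not_lt.mp (fun h => hqB (Metric.mem_ball.mpr h))
    have hq1pos : 0 < ‖p₁ - q‖ := lt_of_lt_of_le (by linarith) hq1
    have hseg_ball : segment ℝ p₁ p₂ ⊆ Metric.closedBall p₁ d :=
      (convex_closedBall p₁ d).segment_subset (Metric.mem_closedBall_self hdnn)
        (by rw [Metric.mem_closedBall, dist_comm, dist_eq_norm, ← hd])
    have hxq : ∀ x ∈ segment ℝ p₁ p₂, ‖p₁ - q‖ / 2 ≤ ‖x - q‖ := by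
      intro x hx
      have h1 : dist p₁ x ≤ d := by
        rw [dist_comm]; exact Metric.mem_closedBall.mp (hseg_ball hx)
      have h2 : dist p₁ q ≤ dist p₁ x + dist x q := dist_triangle _ _ _
      have h3 : dist p₁ q = ‖p₁ - q‖ := dist_eq_norm _ _
      have h4 : dist x q = ‖x - q‖ := dist_eq_norm _ _
      linarith
    have hsegsub : segment ℝ p₁ p₂ ⊆ (convexHull ℝ Ω) \ {q} := by
      intro x hx
      refine ⟨(convex_convexHull ℝ Ω).segment_subset hp₁' hp₂' hx, ?_⟩
      intro hxq'
      rw [Set.mem_singleton_iff] at hxq'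
      have hx0 := hxq x hx
      rw [hxq', sub_self, norm_zero] at hx0
      linarith [half_pos hq1pos]
    have hbound' : ∀ x ∈ segment ℝ p₁ p₂, ‖H' x q‖ ≤ 8*C*(‖p₁ - q‖ ^ 3)⁻¹ := by
      intro x hx
      have hxne : x ≠ q := fun h => (hsegsub hx).2 (by rw [h]; rfl)
      refine le_trans (hH' q hqΩ x (hsegsub hx).1 hxne) ?_
      have hx2 : ‖p₁ - q‖ / 2 ≤ ‖x - q‖ := hxq x hx
      have hx3 : (‖p₁ - q‖ / 2) ^ 3 ≤ ‖x - q‖ ^ 3 :=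
        pow_le_pow_left₀ (by positivity) hx2 3
      have hx4 : (‖x - q‖ ^ 3)⁻¹ ≤ ((‖p₁ - q‖ / 2) ^ 3)⁻¹ :=
        inv_anti₀ (by positivity) hx3
      calc C * (‖x - q‖ ^ 3)⁻¹ ≤ C * ((‖p₁ - q‖ / 2) ^ 3)⁻¹ :=
            mul_le_mul_of_nonneg_left hx4 hC.le
        _ = 8*C*(‖p₁ - q‖ ^ 3)⁻¹ := by
            rw [div_pow]
            rw [inv_div]
            ring
    have hmv := Convex.norm_image_sub_le_of_norm_hasFDerivWithin_le
      (fun x hx => (hdiff q hqΩ x (hsegsub hx)).mono hsegsub)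
      hbound' (convex_segment p₁ p₂) (left_mem_segment ℝ p₁ p₂)
      (right_mem_segment ℝ p₁ p₂)
    calc ‖H p₁ q - H p₂ q‖ = ‖H p₂ q - H p₁ q‖ := norm_sub_rev _ _
      _ ≤ 8*C*(‖p₁ - q‖ ^ 3)⁻¹ * ‖p₂ - p₁‖ := hmv
      _ = 8*C*d * (‖p₁ - q‖ ^ 3)⁻¹ := by rw [norm_sub_rev p₂ p₁, ← hd]; ring
  -- far integral estimate
  have h2dR : 2*d ≤ R := by rw [hR]; linarith
  have hRlog : 0 ≤ Real.log R - Real.log (2*d) := by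
    have := Real.log_le_log (by positivity : (0:ℝ) < 2*d) h2dR
    linarith
  have hΩdiffsub : Ω \ B ⊆ Metric.closedBall p₁ R \ Metric.ball p₁ (2*d) := by
    intro q hq
    refine ⟨?_, hq.2⟩
    rw [Metric.mem_closedBall]
    have := Metric.dist_le_diam_of_mem hbdd hq.1 hp₁
    rw [hR]; linarith
  have hfar : ‖∫ q in Ω \ B, (f q • H p₁ q - f q • H p₂ q)‖
      ≤ (8*C*M*d) * (4*Real.pi*(Real.log R - Real.log (2*d))) := by
    refine le_trans (norm_integral_le_lintegral_norm _) ?_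
    refine ENNReal.toReal_le_of_le_ofReal
      (mul_nonneg (by positivity) (by positivity)) ?_
    have hmeasdiff : MeasurableSet (Ω \ B) := hmeas.diff measurableSet_ball
    calc ∫⁻ q in Ω \ B, ENNReal.ofReal ‖f q • H p₁ q - f q • H p₂ q‖
        ≤ ∫⁻ q in Ω \ B,
            ENNReal.ofReal (8*C*M*d) * ENNReal.ofReal ((‖p₁ - q‖ ^ 3)⁻¹) := by
          refine lintegral_mono_ae ?_
          filter_upwards [ae_restrict_mem hmeasdiff,
            ae_restrict_of_ae_restrict_of_subset Set.diff_subset hf] with q hqmem hfq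
          have h1 := hHdiff q hqmem
          have h2 : ‖f q • H p₁ q - f q • H p₂ q‖
              ≤ 8*C*M*d * (‖p₁ - q‖ ^ 3)⁻¹ := by
            rw [← smul_sub, norm_smul, Real.norm_eq_abs]
            calc |f q| * ‖H p₁ q - H p₂ q‖
                ≤ M * (8*C*d * (‖p₁ - q‖ ^ 3)⁻¹) :=
                  mul_le_mul hfq h1 (norm_nonneg _) hM
              _ = 8*C*M*d * (‖p₁ - q‖ ^ 3)⁻¹ := by ring
          calc ENNReal.ofReal ‖f q • H p₁ q - f q • H p₂ q‖
              ≤ ENNReal.ofReal (8*C*M*d * (‖p₁ - q‖ ^ 3)⁻¹) :=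
                ENNReal.ofReal_le_ofReal h2
            _ = ENNReal.ofReal (8*C*M*d) * ENNReal.ofReal ((‖p₁ - q‖ ^ 3)⁻¹) :=
                ENNReal.ofReal_mul (by positivity)
      _ = ENNReal.ofReal (8*C*M*d)
            * ∫⁻ q in Ω \ B, ENNReal.ofReal ((‖p₁ - q‖ ^ 3)⁻¹) :=
          lintegral_const_mul' _ _ ENNReal.ofReal_ne_top
      _ ≤ ENNReal.ofReal (8*C*M*d)
            * ∫⁻ q in Metric.closedBall p₁ R \ Metric.ball p₁ (2*d),
                ENNReal.ofReal ((‖p₁ - q‖ ^ 3)⁻¹) :=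
          mul_le_mul_right (lintegral_mono_set hΩdiffsub) _
      _ ≤ ENNReal.ofReal (8*C*M*d)
            * (ENNReal.ofReal (4*Real.pi)
                * ENNReal.ofReal (Real.log R - Real.log (2*d))) :=
          mul_le_mul_right (radial_annulus_E3 p₁ (2*d) R (by positivity) h2dR) _
      _ = ENNReal.ofReal ((8*C*M*d) * (4*Real.pi*(Real.log R - Real.log (2*d)))) := by
          rw [← ENNReal.ofReal_mul (by positivity), ← ENNReal.ofReal_mul (by positivity)]
  -- combine
  rw [hsplit0, hsplit, hql]
  refine le_trans (norm_add_le _ _) (le_trans (add_le_add hnear_tot hfar) ?_)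
  have hlog2 : (0:ℝ) ≤ Real.log 2 := Real.log_nonneg one_le_two
  have hlogprod : 0 ≤ Real.log R * (- Real.log d) :=
    mul_nonneg hlogR (by linarith)
  have hkeylog : Real.log R - Real.log (2*d) ≤ (1 + Real.log R) * (1 - Real.log d) := by
    rw [Real.log_mul two_ne_zero (ne_of_gt hdpos)]
    nlinarith
  have hfar2 : (8*C*M*d) * (4*Real.pi*(Real.log R - Real.log (2*d)))
      ≤ 32*Real.pi*C*(1+Real.log R) * (M * (d * (1 - Real.log d))) := by
    have h1 : (8*C*M*d) * (4*Real.pi*(Real.log R - Real.log (2*d)))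
        ≤ (8*C*M*d) * (4*Real.pi*((1 + Real.log R) * (1 - Real.log d))) := by
      refine mul_le_mul_of_nonneg_left ?_ (by positivity)
      exact mul_le_mul_of_nonneg_left hkeylog (by positivity)
    calc (8*C*M*d) * (4*Real.pi*(Real.log R - Real.log (2*d)))
        ≤ (8*C*M*d) * (4*Real.pi*((1 + Real.log R) * (1 - Real.log d))) := h1
      _ = 32*Real.pi*C*(1+Real.log R) * (M * (d * (1 - Real.log d))) := by ring
  have hnear2' : C*M*(4*Real.pi*(2*d)) + C*M*(4*Real.pi*(3*d))
      ≤ 20*Real.pi*C * (M * (d * (1 - Real.log d))) := by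
    have h1 : d ≤ d * (1 - Real.log d) := by nlinarith
    have h2 : C*M*(4*Real.pi*(2*d)) + C*M*(4*Real.pi*(3*d))
        = 20*Real.pi*C * (M * d) := by ring
    rw [h2]
    refine mul_le_mul_of_nonneg_left ?_ (by positivity)
    exact mul_le_mul_of_nonneg_left h1 hM
  have hrest : 0 ≤ (2*C*(V + 4*Real.pi) + 1) * (M * (d * (1 - Real.log d))) := by
    have : 0 ≤ M * (d * (1 - Real.log d)) := by
      refine mul_nonneg hM (mul_nonneg hdnn (by linarith))
    have h2 : 0 ≤ 2*C*(V + 4*Real.pi) + 1 := by positivity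
    exact mul_nonneg h2 this
  nlinarith [hfar2, hnear2', hrest]
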